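/- Let $\phi^2, \psi^2 > 0$ and $\delta^2 = \phi^2 + \psi^2$. Let $X_1, \dots, X_n$ be real random variables with $\mathbb{E}[X_i] = c_i$ and $\mathbb{E}[(X_i - c_i)^2] = \psi_i^2$, and let $m \in \mathbb{R}$ with $\phi_i^2 = (m - c_i)^2$. Assume $\phi^2 = \frac{1}{n}\sum\phi_i^2$ and $\psi^2 = \frac{1}{n}\sum\psi_i^2$. Then for $Y_i = \frac{\psi^2}{\delta^2} m + \frac{\phi^2}{\delta^2} X_i$, it holds that $\frac{1}{n}\sum_{i=1}^n \mathbb{E}[(Y_i - c_i)^2] = \frac{\psi^2\phi^2}{\delta^2}$. -/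

import Mathlib

open MeasureTheory

/-- the optimal shrinkage `Yᵢ = (ψ²/δ²) m + (φ²/δ²) Xᵢ` achieves the
averaged quadratic risk `ψ²φ²/δ²`, where `δ² = φ² + ψ²`. -/
theorem stmt4 {Ω : Type*} [MeasurableSpace Ω] (μ : Measure Ω) [IsProbabilityMeasure μ]
    (n : ℕ) (hn : 0 < n) (X : Fin n → Ω → ℝ) (hX : ∀ i, MemLp (X i) 2 μ)
    (c : Fin n → ℝ) (hmean : ∀ i, ∫ ω, X i ω ∂μ = c i)
    (m : ℝ) (φsq ψsq δsq : ℝ) (hφ : 0 < φsq) (hψ : 0 < ψsq) (hδ : δsq = φsq + ψsq)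
    (ψi : Fin n → ℝ) (hvar : ∀ i, ∫ ω, (X i ω - c i) ^ 2 ∂μ = ψi i)
    (φi : Fin n → ℝ) (hbias : ∀ i, φi i = (m - c i) ^ 2)
    (hφavg : φsq = (1 / n : ℝ) * ∑ i, φi i) (hψavg : ψsq = (1 / n : ℝ) * ∑ i, ψi i) :
    (1 / n : ℝ) * ∑ i, ∫ ω, (ψsq / δsq * m + φsq / δsq * X i ω - c i) ^ 2 ∂μ =
      ψsq * φsq / δsq := by
  have hδpos : 0 < δsq := by rw [hδ]; linarith
  have hδne : δsq ≠ 0 := ne_of_gt hδpos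
  have key : ∀ i, ∫ ω, (ψsq / δsq * m + φsq / δsq * X i ω - c i) ^ 2 ∂μ
      = (φsq / δsq) ^ 2 * ψi i + (ψsq / δsq) ^ 2 * φi i := by
    intro i
    have h1 : MemLp (fun ω => X i ω - c i) 2 μ := (hX i).sub (memLp_const _)
    have hint2 : Integrable (fun ω => (X i ω - c i) ^ 2) μ := by
      have := h1.integrable_sq
      simpa [pow_two] using this
    have hint1 : Integrable (fun ω => X i ω - c i) μ :=
      h1.integrable (by norm_num)
    have heq : (fun ω => (ψsq / δsq * m + φsq / δsq * X i ω - c i) ^ 2)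
        = fun ω => ((φsq / δsq) ^ 2 * (X i ω - c i) ^ 2
            + (2 * (φsq / δsq) * (ψsq / δsq) * (m - c i)) * (X i ω - c i))
            + (ψsq / δsq * (m - c i)) ^ 2 := by
      funext ω
      have hsum : ψsq / δsq + φsq / δsq = 1 := by
        field_simp [hδ]; linarith
      have : ψsq / δsq * m + φsq / δsq * X i ω - c i
          = φsq / δsq * (X i ω - c i) + ψsq / δsq * (m - c i) := by
        have : c i = (ψsq / δsq + φsq / δsq) * c i := by rw [hsum]; ring
        nlinarith [this]
      rw [this]; ring
    rw [heq, integral_add (by exact (hint2.const_mul _).add (hint1.const_mul _))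
      (integrable_const _), integral_add (hint2.const_mul _) (hint1.const_mul _),
      integral_const_mul, integral_const_mul, integral_const, probReal_univ]
    have hz : ∫ ω, (X i ω - c i) ∂μ = 0 := by
      rw [integral_sub ((hX i).integrable (by norm_num)) (integrable_const _),
        integral_const, probReal_univ, hmean i]
      simp
    rw [hvar i, hz, hbias i]
    simp only [ENNReal.toReal_one, one_smul]
    ring
  simp only [key, Finset.sum_add_distrib, ← Finset.mul_sum]
  rw [mul_add, ← mul_assoc, ← mul_assoc, mul_comm ((1:ℝ)/n) ((φsq/δsq)^2),
    mul_comm ((1:ℝ)/n) ((ψsq/δsq)^2), mul_assoc, mul_assoc, ← hψavg, ← hφavg]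
  field_simp [hδ]
  rw [hδ]
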